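/- The Cautious Scoring norm, defined by S(·,G)=C, S(·,B)=D, R(·,G,C)=1, R(·,G,D)=1−c/((1−2μ)b), R(·,B,C)=c/((1−2μ)b), R(·,B,D)=0, satisfies the equalizer condition [R̃(X,Y,C) − R̃(X,Y,D)]·Δv = c for all contexts (X,Y), where R̃ = (1−μ)R + μ(1−R) and Δv = b. -/

import Mathlib

/-- Cautious Scoring: `R(·,G,C)=1`, `R(·,G,D)=1-c/((1-2μ)b)`,
`R(·,B,C)=c/((1-2μ)b)`, `R(·,B,D)=0`. With `R̃ = (1-μ)R + μ(1-R)` and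
`Δv = b`, the equalizer condition `[R̃(X,Y,C) - R̃(X,Y,D)]·Δv = c` holds in
every context. -/
theorem stmt_12 (μ b c Δv : ℝ)
    (hμ0 : 0 < μ) (hμ : μ < 1/2) (hc : 0 < c) (hcb : c < (1 - 2 * μ) * b)
    (tilde : ℝ → ℝ) (htilde : ∀ R : ℝ, tilde R = (1 - μ) * R + μ * (1 - R))
    (RC RD : Bool → Bool → ℝ)
    (hRCG : ∀ X : Bool, RC X true = 1)
    (hRDG : ∀ X : Bool, RD X true = 1 - c / ((1 - 2 * μ) * b))
    (hRCB : ∀ X : Bool, RC X false = c / ((1 - 2 * μ) * b))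
    (hRDB : ∀ X : Bool, RD X false = 0)
    (hΔv : Δv = b) :
    ∀ X Y : Bool, (tilde (RC X Y) - tilde (RD X Y)) * Δv = c := by
  have hμ2 : 0 < 1 - 2 * μ := by linarith
  have hb : 0 < b := by
    by_contra h
    push_neg at h
    nlinarith
  have hne : (1 - 2 * μ) * b ≠ 0 := by positivity
  intro X Y
  cases Y <;>
    simp only [htilde, hRCG, hRDG, hRCB, hRDB, hΔv] <;>
    field_simp [show (1:ℝ) - μ * 2 ≠ 0 by linarith] <;> ring
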